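/- Let n and m be positive integers with n ≥ 2, let k₁,…,k_m > 0 and v₁,…,v_m be real numbers, and let a₀ ≠ 0 be a real number. Define A₀(ε) = a₀·∏_{i=1}^m k_i/(k_i + v_i ε) for ε near 0, and set b₀ = −(1/n)·A₀'(0) and c₀ = (1/(n(n+1)))·A₀''(0). Then c₀ − b₀²/a₀ = ((n−1)·a₀/(n²(n+1)))·( ∑_{i=1}^m v_i²/k_i² − (2/(n−1))·∑_{1 ≤ j < l ≤ m} v_j v_l/(k_j k_l) ). -/

import Mathlib

open Finset

lemma sq_sum_aux {m : ℕ} (x : Fin m → ℝ) :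
    (∑ i, x i) ^ 2 = ∑ i, (x i) ^ 2 + 2 * ∑ j, ∑ l ∈ Finset.Ioi j, x j * x l := by
  have h := Finset.sum_sum_Ioi_add_eq_sum_sum_off_diag (fun j i => x j * x i)
  have h2 : (∑ i : Fin m, ∑ j ∈ ({i}ᶜ : Finset (Fin m)), x j * x i)
      = (∑ j, x j) ^ 2 - ∑ i, (x i) ^ 2 := by
    have e : ∀ i : Fin m, ∑ j ∈ ({i}ᶜ : Finset (Fin m)), x j * x i
        = (∑ j, x j) * x i - x i ^ 2 := by
      intro i
      rw [← Finset.sum_mul, ← Finset.sum_compl_add_sum {i} x]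
      simp [add_mul]; ring
    rw [Finset.sum_congr rfl fun i _ => e i, Finset.sum_sub_distrib, ← Finset.mul_sum]
    ring
  have h4 : (∑ i : Fin m, ∑ j ∈ Finset.Ioi i, ((fun j i => x j * x i) j i + (fun j i => x j * x i) i j))
      = 2 * ∑ j, ∑ l ∈ Finset.Ioi j, x j * x l := by
    rw [Finset.mul_sum]
    refine Finset.sum_congr rfl fun i _ => ?_
    rw [Finset.mul_sum]
    exact Finset.sum_congr rfl fun j _ => by ring
  have key : (2 : ℝ) * (∑ j, ∑ l ∈ Finset.Ioi j, x j * x l)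
      = (∑ j, x j) ^ 2 - ∑ i, (x i) ^ 2 := by
    rw [← h4, h]; convert h2 using 5
  linarith [key]

lemma hasDerivAt_A {m : ℕ} (k v : Fin m → ℝ) (a₀ : ℝ) (ε : ℝ)
    (hd : ∀ i, k i + v i * ε ≠ 0) :
    HasDerivAt (fun x => a₀ * ∏ i, k i / (k i + v i * x))
      ((a₀ * ∏ i, k i / (k i + v i * ε)) * (-∑ i, v i / (k i + v i * ε))) ε := by
  have hf : ∀ i : Fin m, HasDerivAt (fun x => k i / (k i + v i * x))
      (-(k i * v i) / (k i + v i * ε) ^ 2) ε := by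
    intro i
    have h1 : HasDerivAt (fun x : ℝ => k i + v i * x) (v i) ε := by
      simpa using ((hasDerivAt_id ε).const_mul (v i)).const_add (k i)
    have := (hasDerivAt_const ε (k i)).fun_div h1 (hd i)
    refine this.congr_deriv ?_
    field_simp
    ring
  have hp := HasDerivAt.fun_finsetProd (u := Finset.univ) (fun i _ => hf i)
  have := hp.const_mul a₀
  refine this.congr_deriv ?_
  simp only [smul_eq_mul, Finset.mul_sum, mul_neg, ← Finset.sum_neg_distrib]
  refine Finset.sum_congr rfl fun i _ => ?_
  rw [← Finset.mul_prod_erase Finset.univ (fun j => k j / (k j + v j * ε)) (Finset.mem_univ i)]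
  have hdi := hd i
  generalize (∏ j ∈ univ.erase i, k j / (k j + v j * ε)) = p
  field_simp


/-- For `A₀(ε) = a₀·∏ᵢ kᵢ/(kᵢ+vᵢε)`, with `b₀ = −(1/n)A₀'(0)` and
`c₀ = (1/(n(n+1)))A₀''(0)`, the norm squared `c₀ − b₀²/a₀` equals
`((n−1)a₀/(n²(n+1)))·(∑ᵢ vᵢ²/kᵢ² − (2/(n−1))∑_{j<l} vⱼvₗ/(kⱼkₗ))`. -/
theorem norm_squared_general_test_symmetry
    (n m : ℕ) (hn : 2 ≤ n) (hm : 1 ≤ m) (k v : Fin m → ℝ) (hk : ∀ i, 0 < k i)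
    (a₀ : ℝ) (ha : a₀ ≠ 0) :
    (1 / ((n : ℝ) * ((n : ℝ) + 1)))
        * deriv (deriv (fun ε => a₀ * ∏ i, k i / (k i + v i * ε))) 0
      - (-(1 / (n : ℝ)) * deriv (fun ε => a₀ * ∏ i, k i / (k i + v i * ε)) 0) ^ 2 / a₀
      = (((n : ℝ) - 1) * a₀ / ((n : ℝ) ^ 2 * ((n : ℝ) + 1)))
        * ((∑ i, v i ^ 2 / k i ^ 2)
           - (2 / ((n : ℝ) - 1)) * ∑ j, ∑ l ∈ Finset.Ioi j, v j * v l / (k j * k l)) := by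
  set S : ℝ := ∑ i, v i / k i with hS
  set Q : ℝ := ∑ i, v i ^ 2 / k i ^ 2 with hQ
  set P : ℝ := ∑ j, ∑ l ∈ Finset.Ioi j, v j * v l / (k j * k l) with hP
  have hd0 : ∀ i, k i + v i * (0:ℝ) ≠ 0 := fun i => by
    simpa using (hk i).ne'
  have hprod0 : (∏ i, k i / (k i + v i * (0:ℝ))) = 1 := by
    rw [Finset.prod_eq_one]
    intro i _
    rw [mul_zero, add_zero, div_self (hk i).ne']
  -- first derivative at 0
  have hF0 : HasDerivAt (fun ε => a₀ * ∏ i, k i / (k i + v i * ε)) (a₀ * (-S)) 0 := by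
    have := hasDerivAt_A k v a₀ 0 hd0
    rw [hprod0] at this
    convert this using 1
    simp [hS]
  -- eventual nonvanishing of denominators
  have hE : ∀ᶠ ε in nhds (0:ℝ), ∀ i, k i + v i * ε ≠ 0 := by
    rw [Filter.eventually_all]
    intro i
    have hc : ContinuousAt (fun ε : ℝ => k i + v i * ε) 0 := by fun_prop
    have := hc.eventually_ne (by simpa using (hk i).ne')
    exact this
  -- deriv F agrees with G near 0
  have hev : deriv (fun ε => a₀ * ∏ i, k i / (k i + v i * ε))
      =ᶠ[nhds (0:ℝ)] fun ε => (a₀ * ∏ i, k i / (k i + v i * ε)) * (-∑ i, v i / (k i + v i * ε)) :=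
    hE.mono fun ε hε => (hasDerivAt_A k v a₀ ε hε).deriv
  have hd1 : deriv (fun ε => a₀ * ∏ i, k i / (k i + v i * ε)) 0 = a₀ * (-S) := hF0.deriv
  -- second derivative
  have hh : HasDerivAt (fun ε => -∑ i, v i / (k i + v i * ε)) Q 0 := by
    have hterm : ∀ i : Fin m, HasDerivAt (fun ε => v i / (k i + v i * ε))
        (-(v i * v i) / (k i + v i * (0:ℝ)) ^ 2) 0 := by
      intro i
      have h1 : HasDerivAt (fun x : ℝ => k i + v i * x) (v i) 0 := by
        simpa using ((hasDerivAt_id 0).const_mul (v i)).const_add (k i)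
      have := (hasDerivAt_const (0:ℝ) (v i)).fun_div h1 (hd0 i)
      refine this.congr_deriv ?_
      field_simp
      ring
    have hsum := HasDerivAt.fun_sum (u := Finset.univ) (fun i _ => hterm i)
    have := hsum.neg
    refine this.congr_deriv ?_
    rw [hQ, ← Finset.sum_neg_distrib]
    refine Finset.sum_congr rfl fun i _ => ?_
    rw [mul_zero, add_zero]
    ring
  have hG : HasDerivAt (fun ε => (a₀ * ∏ i, k i / (k i + v i * ε)) * (-∑ i, v i / (k i + v i * ε)))
      ((a₀ * (-S)) * (-S) + a₀ * Q) 0 := by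
    have := hF0.mul hh
    refine this.congr_deriv ?_
    rw [hprod0]
    simp [hS]
  have hd2 : deriv (deriv (fun ε => a₀ * ∏ i, k i / (k i + v i * ε))) 0
      = (a₀ * (-S)) * (-S) + a₀ * Q := by
    rw [hev.deriv_eq]
    exact hG.deriv
  rw [hd1, hd2]
  -- algebraic identity
  have hsq : S ^ 2 = Q + 2 * P := by
    have h := sq_sum_aux (fun i => v i / k i)
    simp only [div_pow, div_mul_div_comm] at h
    rw [hS, hQ, hP]
    exact h
  have hn0 : (n : ℝ) ≠ 0 := by positivity
  have hn1 : (n : ℝ) + 1 ≠ 0 := by positivity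
  have hnm1 : (n : ℝ) - 1 ≠ 0 := by
    have : (2:ℝ) ≤ n := by exact_mod_cast hn
    linarith
  rw [show a₀ * -S * -S + a₀ * Q = a₀ * (Q + 2*P) + a₀ * Q from by rw [← hsq]; ring]
  rw [show (-(1/(n:ℝ)) * (a₀ * -S)) ^ 2 = a₀ ^ 2 * (Q + 2*P) / (n:ℝ)^2 from by
    rw [← hsq]; field_simp]
  field_simp
  ring
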